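/- For t > 0, define u_4^0(t,y) = −(2y²/ (t²−y²)^{3/2}) (I_1(√(t²−y²)) + J_1(√(t²−y²))) + (t²/(t²−y²)) (I_0 + I_2 + J_0 − J_2)(√(t²−y²)) − (I_0 + J_0)(√(t²−y²)) on |y| < t. Then ∫_{−t}^{t} u_4^0(t,y) dy = 2 sinh t + 2 sin t − 4t. -/

import Mathlib

open MeasureTheory


open Real


/-- Modified Bessel function of the first kind, order 0. -/
noncomputable def besselI0 (r : ℝ) : ℝ :=
  ∑' k : ℕ, (r / 2) ^ (2 * k) / ((Nat.factorial k : ℝ)) ^ 2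

/-- Bessel function of the first kind, order 0. -/
noncomputable def besselJ0 (r : ℝ) : ℝ :=
  ∑' k : ℕ, (-1 : ℝ) ^ k * (r / 2) ^ (2 * k) / ((Nat.factorial k : ℝ)) ^ 2

/-- Modified Bessel function of the first kind, order 1. -/
noncomputable def besselI1 (r : ℝ) : ℝ :=
  ∑' k : ℕ, (r / 2) ^ (2 * k + 1) / ((Nat.factorial k : ℝ) * (Nat.factorial (k + 1)))

/-- Bessel function of the first kind, order 1. -/
noncomputable def besselJ1 (r : ℝ) : ℝ :=
  ∑' k : ℕ, (-1 : ℝ) ^ k * (r / 2) ^ (2 * k + 1) / ((Nat.factorial k : ℝ) * (Nat.factorial (k + 1)))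

/-- Modified Bessel function of the first kind, order 2. -/
noncomputable def besselI2 (r : ℝ) : ℝ :=
  ∑' k : ℕ, (r / 2) ^ (2 * k + 2) / ((Nat.factorial k : ℝ) * (Nat.factorial (k + 2)))

/-- Bessel function of the first kind, order 2. -/
noncomputable def besselJ2 (r : ℝ) : ℝ :=
  ∑' k : ℕ, (-1 : ℝ) ^ k * (r / 2) ^ (2 * k + 2) / ((Nat.factorial k : ℝ) * (Nat.factorial (k + 2)))

noncomputable def u40p1 (k : ℕ) : ℝ :=
  (1 + (-1:ℝ)^k) / (2 * 4^k * (k.factorial : ℝ) * ((k+1).factorial : ℝ))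
noncomputable def u40p0 (k : ℕ) : ℝ :=
  (1 + (-1:ℝ)^k) / (4^k * ((k.factorial : ℝ))^2)
noncomputable def u40q (k : ℕ) : ℝ :=
  (1 - (-1:ℝ)^k) / (4^(k+1) * (k.factorial : ℝ) * ((k+2).factorial : ℝ))
noncomputable def u40g (t : ℝ) (n : ℕ) (y : ℝ) : ℝ :=
  (-2*y^2*u40p1 (n+1) + t^2*(u40p0 (n+1) + u40q n)) * (t^2-y^2)^n
    - u40p0 (n+1) * (t^2-y^2)^(n+1)

lemma u40summable {f : ℕ → ℝ} (C x : ℝ) (h : ∀ n, |f n| ≤ C * x ^ n / n.factorial) :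
    Summable f := by
  apply Summable.of_norm_bounded ((Real.summable_pow_div_factorial x).mul_left C)
  intro n
  simpa [Real.norm_eq_abs, mul_div_assoc] using h n

lemma u40le (C x d : ℝ) (k : ℕ) (c : ℝ) (hc : |c| ≤ C) (hx : 0 ≤ x)
    (hd : (k.factorial : ℝ) ≤ d) :
    |c * x ^ k / d| ≤ C * x ^ k / k.factorial := by
  have hk : (0:ℝ) < k.factorial := by exact_mod_cast k.factorial_pos
  have hd0 : (0:ℝ) < d := lt_of_lt_of_le hk hd
  rw [abs_div, abs_mul, abs_pow, abs_of_nonneg hx, abs_of_pos hd0]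
  exact div_le_div₀ (mul_nonneg ((abs_nonneg c).trans hc) (pow_nonneg hx k)) (mul_le_mul_of_nonneg_right hc (pow_nonneg hx k)) hk hd

lemma u40fac_le (k m : ℕ) (a : ℝ) (ha : 1 ≤ a) :
    (k.factorial : ℝ) ≤ a * k.factorial * m.factorial := by
  have h1 : (1:ℝ) ≤ m.factorial := by exact_mod_cast m.factorial_pos
  have h2 : (0:ℝ) < k.factorial := by exact_mod_cast k.factorial_pos
  calc (k.factorial : ℝ) = 1 * k.factorial * 1 := by ring
    _ ≤ a * k.factorial * m.factorial := by
        apply mul_le_mul (mul_le_mul ha le_rfl h2.le (zero_le_one.trans ha)) h1 zero_le_one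
        positivity

lemma u40div_le (c d C : ℝ) (k : ℕ) (hc : |c| ≤ C) (hd : (k.factorial : ℝ) ≤ d) :
    |c/d| ≤ C/(k.factorial : ℝ) := by
  have hk : (0:ℝ) < k.factorial := by exact_mod_cast k.factorial_pos
  have hd0 : (0:ℝ) < d := hk.trans_le hd
  rw [abs_div, abs_of_pos hd0, div_le_div_iff₀ hd0 hk]
  exact mul_le_mul hc hd hk.le ((abs_nonneg c).trans hc)

lemma u40abs1 (k : ℕ) : |1 + (-1:ℝ)^k| ≤ 2 := by
  rcases neg_one_pow_eq_or ℝ k with h | h <;> rw [h] <;> norm_num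

lemma u40abs2 (k : ℕ) : |1 - (-1:ℝ)^k| ≤ 2 := by
  rcases neg_one_pow_eq_or ℝ k with h | h <;> rw [h] <;> norm_num

lemma u40p1_le (k : ℕ) : |u40p1 k| ≤ 2/(k.factorial:ℝ) :=
  u40div_le _ _ _ k (u40abs1 k) (by
    have := u40fac_le k (k+1) (2*4^k) (by nlinarith [one_le_pow₀ (by norm_num : (1:ℝ) ≤ 4) (n := k)])
    linarith)

lemma u40p0_le (k : ℕ) : |u40p0 k| ≤ 2/(k.factorial:ℝ) :=
  u40div_le _ _ _ k (u40abs1 k) (by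
    have h := u40fac_le k k ((4:ℝ)^k) (one_le_pow₀ (by norm_num))
    calc ((k.factorial:ℕ):ℝ) ≤ 4^k*k.factorial*k.factorial := h
      _ = 4^k*((k.factorial:ℝ))^2 := by ring)

lemma u40q_le (k : ℕ) : |u40q k| ≤ 2/(k.factorial:ℝ) :=
  u40div_le _ _ _ k (u40abs2 k) (u40fac_le k (k+2) _ (one_le_pow₀ (by norm_num)))

lemma u40pointwise (t y : ℝ) (hx : 0 < t ^ 2 - y ^ 2) :
    -(2 * y ^ 2 / (t ^ 2 - y ^ 2) ^ ((3 : ℝ) / 2)) *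
        (besselI1 (Real.sqrt (t ^ 2 - y ^ 2)) + besselJ1 (Real.sqrt (t ^ 2 - y ^ 2))) +
      t ^ 2 / (t ^ 2 - y ^ 2) *
        (besselI0 (Real.sqrt (t ^ 2 - y ^ 2)) + besselI2 (Real.sqrt (t ^ 2 - y ^ 2)) +
          besselJ0 (Real.sqrt (t ^ 2 - y ^ 2)) - besselJ2 (Real.sqrt (t ^ 2 - y ^ 2))) -
      (besselI0 (Real.sqrt (t ^ 2 - y ^ 2)) + besselJ0 (Real.sqrt (t ^ 2 - y ^ 2)))
    = ∑' n, u40g t n y := by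
  set K := t ^ 2 - y ^ 2 with hKdef
  set r := Real.sqrt K with hrdef
  have hK : 0 < K := hx
  have hKne : K ≠ 0 := hK.ne'
  have hr2 : r ^ 2 = K := Real.sq_sqrt hK.le
  have hr0 : 0 < r := Real.sqrt_pos.mpr hK
  have hrne : r ≠ 0 := hr0.ne'
  have hfne : ∀ m : ℕ, ((m.factorial : ℕ) : ℝ) ≠ 0 := fun m => by positivity
  have h4ne : ∀ k : ℕ, ((4:ℝ) ^ k) ≠ 0 := fun k => by positivity
  have hKr : K ^ ((3:ℝ)/2) = K * r := by
    rw [show ((3:ℝ)/2) = (1:ℝ) + 1/2 by norm_num, Real.rpow_add hK, Real.rpow_one,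
      ← Real.sqrt_eq_rpow, ← hrdef]
  -- power identities
  have e0 : ∀ k : ℕ, (r/2)^(2*k) = K^k/4^k := by
    intro k
    rw [div_pow, pow_mul, hr2, pow_mul]
    norm_num
  have e1 : ∀ k : ℕ, (r/2)^(2*k+1) = (K^k/4^k) * (r/2) := by
    intro k; rw [pow_succ, e0 k]
  have e2 : ∀ k : ℕ, (r/2)^(2*k+2) = K^(k+1)/4^(k+1) := by
    intro k; rw [show 2*k+2 = 2*(k+1) from by ring, e0 (k+1)]
  -- Bessel functions in power-series-in-K form
  have hI1 : besselI1 r = ∑' k : ℕ, (r/2) * K^k / (4^k*(k.factorial:ℝ)*((k+1).factorial:ℝ)) := by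
    apply tsum_congr; intro k
    rw [e1 k]
    field_simp
  have hJ1 : besselJ1 r
      = ∑' k : ℕ, ((-1:ℝ)^k*(r/2)) * K^k / (4^k*(k.factorial:ℝ)*((k+1).factorial:ℝ)) := by
    apply tsum_congr; intro k
    rw [e1 k]
    field_simp
  have hI0 : besselI0 r = ∑' k : ℕ, (1:ℝ) * K^k / (4^k*((k.factorial:ℝ))^2) := by
    apply tsum_congr; intro k
    rw [e0 k]
    field_simp
  have hJ0 : besselJ0 r = ∑' k : ℕ, ((-1:ℝ)^k) * K^k / (4^k*((k.factorial:ℝ))^2) := by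
    apply tsum_congr; intro k
    rw [e0 k]
    field_simp
  have hI2 : besselI2 r = ∑' k : ℕ, (K/4) * K^k / (4^k*(k.factorial:ℝ)*((k+2).factorial:ℝ)) := by
    apply tsum_congr; intro k
    rw [e2 k]
    field_simp
    ring
  have hJ2 : besselJ2 r
      = ∑' k : ℕ, ((-1:ℝ)^k*(K/4)) * K^k / (4^k*(k.factorial:ℝ)*((k+2).factorial:ℝ)) := by
    apply tsum_congr; intro k
    rw [e2 k]
    field_simp
    ring
  -- summability
  have hd1 : ∀ k:ℕ, ((k.factorial:ℕ):ℝ) ≤ 4^k*(k.factorial:ℝ)*((k+1).factorial:ℝ) :=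
    fun k => u40fac_le k (k+1) _ (one_le_pow₀ (by norm_num))
  have hd0 : ∀ k:ℕ, ((k.factorial:ℕ):ℝ) ≤ 4^k*((k.factorial:ℝ))^2 := fun k => by
    have h := u40fac_le k k ((4:ℝ)^k) (one_le_pow₀ (by norm_num))
    calc ((k.factorial:ℕ):ℝ) ≤ 4^k*k.factorial*k.factorial := h
      _ = 4^k*((k.factorial:ℝ))^2 := by ring
  have hd2 : ∀ k:ℕ, ((k.factorial:ℕ):ℝ) ≤ 4^k*(k.factorial:ℝ)*((k+2).factorial:ℝ) :=
    fun k => u40fac_le k (k+2) _ (one_le_pow₀ (by norm_num))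
  have hrr : |r/2| ≤ r := by rw [abs_of_nonneg (by positivity)]; linarith
  have hKK : |K/4| ≤ K := by rw [abs_of_nonneg (by positivity)]; linarith
  have habs : ∀ (k:ℕ) (c:ℝ), |(-1:ℝ)^k * c| = |c| := fun k c => by
    simp [abs_mul, abs_pow]
  have sI1 : Summable (fun k:ℕ => (r/2) * K^k / (4^k*(k.factorial:ℝ)*((k+1).factorial:ℝ))) :=
    u40summable r K (fun k => u40le r K _ k _ hrr hK.le (hd1 k))
  have sJ1 : Summable (fun k:ℕ =>
      ((-1:ℝ)^k*(r/2)) * K^k / (4^k*(k.factorial:ℝ)*((k+1).factorial:ℝ))) :=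
    u40summable r K (fun k => u40le r K _ k _ (by rw [habs]; exact hrr) hK.le (hd1 k))
  have sI0 : Summable (fun k:ℕ => (1:ℝ) * K^k / (4^k*((k.factorial:ℝ))^2)) :=
    u40summable 1 K (fun k => u40le 1 K _ k _ (by norm_num) hK.le (hd0 k))
  have sJ0 : Summable (fun k:ℕ => ((-1:ℝ)^k) * K^k / (4^k*((k.factorial:ℝ))^2)) :=
    u40summable 1 K (fun k => u40le 1 K _ k _ (by simp [abs_pow]) hK.le (hd0 k))
  have sI2 : Summable (fun k:ℕ => (K/4) * K^k / (4^k*(k.factorial:ℝ)*((k+2).factorial:ℝ))) :=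
    u40summable K K (fun k => u40le K K _ k _ hKK hK.le (hd2 k))
  have sJ2 : Summable (fun k:ℕ =>
      ((-1:ℝ)^k*(K/4)) * K^k / (4^k*(k.factorial:ℝ)*((k+2).factorial:ℝ))) :=
    u40summable K K (fun k => u40le K K _ k _ (by rw [habs]; exact hKK) hK.le (hd2 k))
  have sp1 : Summable (fun k => u40p1 k * K^k) := u40summable 2 K (fun k => by
    rw [abs_mul, abs_pow, abs_of_nonneg hK.le]
    calc |u40p1 k| * K^k ≤ (2/(k.factorial:ℝ)) * K^k :=
          mul_le_mul_of_nonneg_right (u40p1_le k) (pow_nonneg hK.le k)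
      _ = 2*K^k/(k.factorial:ℝ) := by ring)
  have sp0 : Summable (fun k => u40p0 k * K^k) := u40summable 2 K (fun k => by
    rw [abs_mul, abs_pow, abs_of_nonneg hK.le]
    calc |u40p0 k| * K^k ≤ (2/(k.factorial:ℝ)) * K^k :=
          mul_le_mul_of_nonneg_right (u40p0_le k) (pow_nonneg hK.le k)
      _ = 2*K^k/(k.factorial:ℝ) := by ring)
  have sq' : Summable (fun k => u40q k * K^k) := u40summable 2 K (fun k => by
    rw [abs_mul, abs_pow, abs_of_nonneg hK.le]
    calc |u40q k| * K^k ≤ (2/(k.factorial:ℝ)) * K^k :=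
          mul_le_mul_of_nonneg_right (u40q_le k) (pow_nonneg hK.le k)
      _ = 2*K^k/(k.factorial:ℝ) := by ring)
  have sA : Summable (fun k => (-2*y^2) * (u40p1 k * K^k) / K) := (sp1.mul_left _).div_const _
  have sB : Summable (fun k => t^2 * (u40p0 k * K^k) / K) := (sp0.mul_left _).div_const _
  have sC : Summable (fun k => t^2 * (u40q k * K^k)) := sq'.mul_left _
  have sE : Summable (fun k => (-2*y^2) * (u40p1 k * K^k) / K + t^2 * (u40p0 k * K^k) / K
      - u40p0 k * K^k) := (sA.add sB).sub sp0
  -- the three grouped terms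
  have hTerm1 : -(2 * y ^ 2 / K ^ ((3:ℝ)/2)) * (besselI1 r + besselJ1 r)
      = ∑' k, (-2*y^2) * (u40p1 k * K^k) / K := by
    rw [hI1, hJ1, ← Summable.tsum_add sI1 sJ1, hKr, ← tsum_mul_left]
    apply tsum_congr; intro k
    simp only [u40p1]
    field_simp
  have hTerm2 : t^2/K * (besselI0 r + besselI2 r + besselJ0 r - besselJ2 r)
      = (∑' k, t^2 * (u40p0 k * K^k) / K) + ∑' k, t^2 * (u40q k * K^k) := by
    have hre : besselI0 r + besselI2 r + besselJ0 r - besselJ2 r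
        = (besselI0 r + besselJ0 r) + (besselI2 r - besselJ2 r) := by ring
    rw [hre, hI0, hJ0, ← Summable.tsum_add sI0 sJ0, hI2, hJ2, ← Summable.tsum_sub sI2 sJ2, mul_add,
      ← tsum_mul_left, ← tsum_mul_left]
    congr 1
    · apply tsum_congr; intro k
      simp only [u40p0]
      field_simp
    · apply tsum_congr; intro k
      simp only [u40q]
      field_simp
      ring
  have hTerm3 : besselI0 r + besselJ0 r = ∑' k, u40p0 k * K^k := by
    rw [hI0, hJ0, ← Summable.tsum_add sI0 sJ0]
    apply tsum_congr; intro k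
    simp only [u40p0]
    field_simp
  rw [hTerm1, hTerm2, hTerm3]
  have hgroup : (∑' k, (-2*y^2) * (u40p1 k * K^k) / K)
      + ((∑' k, t^2 * (u40p0 k * K^k) / K) + ∑' k, t^2 * (u40q k * K^k))
      - (∑' k, u40p0 k * K^k)
      = ((∑' k, (-2*y^2) * (u40p1 k * K^k) / K) + (∑' k, t^2 * (u40p0 k * K^k) / K)
          - (∑' k, u40p0 k * K^k)) + ∑' k, t^2 * (u40q k * K^k) := by ring
  rw [hgroup, ← Summable.tsum_add sA sB, ← Summable.tsum_sub (sA.add sB) sp0]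
  rw [Summable.tsum_eq_zero_add sE]
  have hE0 : (-2*y^2) * (u40p1 0 * K^0) / K + t^2 * (u40p0 0 * K^0) / K - u40p0 0 * K^0 = 0 := by
    norm_num [u40p1, u40p0]
    field_simp
    rw [hKdef]
    ring
  rw [hE0, zero_add, ← Summable.tsum_add ((summable_nat_add_iff 1).mpr sE) sC]
  apply tsum_congr; intro n
  simp only [u40g, u40p1, u40p0, u40q, ← hKdef]
  field_simp
  ring

lemma u40W (t : ℝ) : ∀ m : ℕ, ∫ y in (-t)..t, (t^2 - y^2)^m =
    2*t^(2*m+1)*4^m*((m.factorial:ℝ))^2/((2*m+1).factorial) := by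
  intro m
  induction m with
  | zero => simp; ring
  | succ m ih =>
    have hc : ∀ k : ℕ, Continuous (fun y : ℝ => (t^2 - y^2)^k) := by
      intro k; fun_prop
    have hder : ∀ y : ℝ, HasDerivAt (fun y : ℝ => y * (t^2-y^2)^(m+1))
        ((t^2-y^2)^(m+1) - 2*(m+1)*(y^2*(t^2-y^2)^m)) y := by
      intro y
      have h1 : HasDerivAt (fun y : ℝ => t^2 - y^2) (-(2*y^1)) y :=
        (hasDerivAt_pow 2 y).const_sub (t^2)
      have h3 : HasDerivAt (fun y : ℝ => y * (t^2-y^2)^(m+1))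
          (1 * (t^2-y^2)^(m+1) + y * (((m+1:ℕ):ℝ) * (t^2-y^2)^(m+1-1) * -(2*y^1))) y :=
        (hasDerivAt_id y).mul (h1.pow (m+1))
      simp only [id_eq, Nat.add_sub_cancel, pow_one] at h3
      convert h3 using 1
      push_cast
      ring
    have key : ∫ y in (-t)..t, ((t^2-y^2)^(m+1) - 2*(m+1)*(y^2*(t^2-y^2)^m)) = 0 := by
      rw [intervalIntegral.integral_eq_sub_of_hasDerivAt (fun y _ => hder y)
        (Continuous.intervalIntegrable (by fun_prop) _ _)]
      simp [sub_self]
    rw [intervalIntegral.integral_sub ((hc (m+1)).intervalIntegrable _ _)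
      ((Continuous.intervalIntegrable (by fun_prop) _ _)),
      intervalIntegral.integral_const_mul] at key
    have hy2 : ∫ y in (-t)..t, y^2*(t^2-y^2)^m
        = t^2 * (∫ y in (-t)..t, (t^2-y^2)^m) - ∫ y in (-t)..t, (t^2-y^2)^(m+1) := by
      rw [← intervalIntegral.integral_const_mul, ← intervalIntegral.integral_sub
        (Continuous.intervalIntegrable (by fun_prop) _ _) ((hc (m+1)).intervalIntegrable _ _)]
      apply intervalIntegral.integral_congr
      intro y _
      ring
    rw [hy2, ih] at key
    have hfac : (((2*(m+1)+1).factorial : ℕ) : ℝ)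
        = (2*m+3)*(2*m+2)*((2*m+1).factorial : ℝ) := by
      have h : 2*(m+1)+1 = (2*m+1)+1+1 := by ring
      rw [h, Nat.factorial_succ, Nat.factorial_succ]
      push_cast
      ring
    have hfacs : (((m+1).factorial : ℕ) : ℝ) = (m+1)*(m.factorial : ℝ) := by
      rw [Nat.factorial_succ]; push_cast; ring
    have hne : ((2*m+1).factorial : ℝ) ≠ 0 := by positivity
    rw [hfac, hfacs]
    field_simp at key ⊢
    linear_combination key

lemma u40intg (t : ℝ) (n : ℕ) : ∫ y in (-t)..t, u40g t n y
    = 2*(1+(-1:ℝ)^(n+1))*t^(2*n+3)/((2*n+3).factorial) := by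
  have hY : ∫ y in (-t)..t, y^2*(t^2-y^2)^n
      = t^2 * (∫ y in (-t)..t, (t^2-y^2)^n) - ∫ y in (-t)..t, (t^2-y^2)^(n+1) := by
    rw [← intervalIntegral.integral_const_mul, ← intervalIntegral.integral_sub
      (Continuous.intervalIntegrable (by fun_prop) _ _)
      (Continuous.intervalIntegrable (by fun_prop) _ _)]
    apply intervalIntegral.integral_congr
    intro y _
    ring
  have hsplit : ∫ y in (-t)..t, u40g t n y
      = (-2*u40p1 (n+1)) * (∫ y in (-t)..t, y^2*(t^2-y^2)^n)
        + (t^2*(u40p0 (n+1)+u40q n)) * (∫ y in (-t)..t, (t^2-y^2)^n)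
        + (-(u40p0 (n+1))) * (∫ y in (-t)..t, (t^2-y^2)^(n+1)) := by
    rw [← intervalIntegral.integral_const_mul, ← intervalIntegral.integral_const_mul,
      ← intervalIntegral.integral_const_mul,
      ← intervalIntegral.integral_add (Continuous.intervalIntegrable (by fun_prop) _ _)
        (Continuous.intervalIntegrable (by fun_prop) _ _),
      ← intervalIntegral.integral_add (Continuous.intervalIntegrable (by fun_prop) _ _)
        (Continuous.intervalIntegrable (by fun_prop) _ _)]
    apply intervalIntegral.integral_congr
    intro y _
    simp only [u40g]
    ring
  rw [hsplit, hY, u40W t n, u40W t (n+1)]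
  simp only [u40p1, u40p0, u40q]
  -- factorial rewrites
  have h1 : (((n+1).factorial : ℕ) : ℝ) = (n+1)*(n.factorial : ℝ) := by
    rw [Nat.factorial_succ]; push_cast; ring
  have h2 : (((n+2).factorial : ℕ) : ℝ) = (n+2)*(n+1)*(n.factorial : ℝ) := by
    rw [show n+2 = (n+1)+1 from rfl, Nat.factorial_succ, Nat.factorial_succ]; push_cast; ring
  have h3 : (((2*(n+1)+1).factorial : ℕ) : ℝ)
      = (2*n+3)*(2*n+2)*((2*n+1).factorial : ℝ) := by
    rw [show 2*(n+1)+1 = (2*n+1)+1+1 from by ring, Nat.factorial_succ, Nat.factorial_succ]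
    push_cast; ring
  have h4 : (((2*n+3).factorial : ℕ) : ℝ)
      = (2*n+3)*(2*n+2)*((2*n+1).factorial : ℝ) := by
    rw [show 2*n+3 = (2*n+1)+1+1 from by ring, Nat.factorial_succ, Nat.factorial_succ]
    push_cast; ring
  have h5 : ((-1:ℝ))^(n+1) = -(-1:ℝ)^n := by rw [pow_succ]; ring
  have hne1 : ((n.factorial : ℕ) : ℝ) ≠ 0 := by positivity
  have hne2 : (((2*n+1).factorial : ℕ) : ℝ) ≠ 0 := by positivity
  rw [h1, h2, h3, h4, h5]
  rw [show 2*(n+1)+1 = 2*n+3 from by ring]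
  field_simp
  ring

lemma u40sum (t : ℝ) : ∑' n : ℕ, 2*(1+(-1:ℝ)^(n+1))*t^(2*n+3)/((2*n+3).factorial)
    = 2*Real.sinh t + 2*Real.sin t - 4*t := by
  set h : ℕ → ℝ := fun n => 2*(t^(2*n+1)/((2*n+1).factorial))
    + 2*((-1:ℝ)^n*t^(2*n+1)/((2*n+1).factorial)) with hh
  have hsum : HasSum h (2*Real.sinh t + 2*Real.sin t) :=
    ((Real.hasSum_sinh t).mul_left 2).add ((Real.hasSum_sin t).mul_left 2)
  have h0 : h 0 = 4*t := by simp [hh]; ring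
  have hshift : HasSum (fun n => h (n+1)) (2*Real.sinh t + 2*Real.sin t - 4*t) := by
    apply (hasSum_nat_add_iff 1).mpr
    simpa [h0] using hsum
  have heq : (fun n : ℕ => 2*(1+(-1:ℝ)^(n+1))*t^(2*n+3)/((2*n+3).factorial))
      = fun n => h (n+1) := by
    funext n
    simp only [hh]
    rw [show 2*(n+1)+1 = 2*n+3 from by ring]
    ring
  rw [heq, hshift.tsum_eq]

/-- `∫₋ₜᵗ u₄⁰(t,y) dy = 2 sinh t + 2 sin t − 4t` where
`u₄⁰(t,y) = −(2y²/(t²−y²)^{3/2})(I₁+J₁) + (t²/(t²−y²))(I₀+I₂+J₀−J₂) − (I₀+J₀)`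
evaluated at `√(t²−y²)`. -/
theorem integral_u40 (t : ℝ) (ht : 0 < t) :
    (∫ y in (-t)..t,
        -(2 * y ^ 2 / (t ^ 2 - y ^ 2) ^ ((3 : ℝ) / 2)) *
            (besselI1 (Real.sqrt (t ^ 2 - y ^ 2)) + besselJ1 (Real.sqrt (t ^ 2 - y ^ 2))) +
          t ^ 2 / (t ^ 2 - y ^ 2) *
            (besselI0 (Real.sqrt (t ^ 2 - y ^ 2)) + besselI2 (Real.sqrt (t ^ 2 - y ^ 2)) +
              besselJ0 (Real.sqrt (t ^ 2 - y ^ 2)) - besselJ2 (Real.sqrt (t ^ 2 - y ^ 2))) -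
          (besselI0 (Real.sqrt (t ^ 2 - y ^ 2)) + besselJ0 (Real.sqrt (t ^ 2 - y ^ 2)))) =
      2 * Real.sinh t + 2 * Real.sin t - 4 * t := by
  have hu : Set.EqOn (fun y =>
      -(2 * y ^ 2 / (t ^ 2 - y ^ 2) ^ ((3 : ℝ) / 2)) *
          (besselI1 (Real.sqrt (t ^ 2 - y ^ 2)) + besselJ1 (Real.sqrt (t ^ 2 - y ^ 2))) +
        t ^ 2 / (t ^ 2 - y ^ 2) *
          (besselI0 (Real.sqrt (t ^ 2 - y ^ 2)) + besselI2 (Real.sqrt (t ^ 2 - y ^ 2)) +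
            besselJ0 (Real.sqrt (t ^ 2 - y ^ 2)) - besselJ2 (Real.sqrt (t ^ 2 - y ^ 2))) -
        (besselI0 (Real.sqrt (t ^ 2 - y ^ 2)) + besselJ0 (Real.sqrt (t ^ 2 - y ^ 2))))
      (fun y => ∑' n, u40g t n y) (Set.Ioo (-t) t) := by
    intro y hy
    exact u40pointwise t y (by nlinarith [hy.1, hy.2])
  have hcont : ∀ n, Continuous (fun y => u40g t n y) := by
    intro n; simp only [u40g]; fun_prop
  have hint : ∀ n, Integrable (fun y => u40g t n y)
      (volume.restrict (Set.Ioo (-t) t)) := fun n =>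
    ((hcont n).integrableOn_Icc).mono_set Set.Ioo_subset_Icc_self
  have hfle : ∀ n:ℕ, (2:ℝ)/((n+1).factorial) ≤ 2/n.factorial := by
    intro n
    apply div_le_div_of_nonneg_left (by norm_num)
      (by exact_mod_cast n.factorial_pos)
    exact_mod_cast Nat.factorial_le (Nat.le_succ n)
  have hb : ∀ (n:ℕ), ∀ y ∈ Set.Ioo (-t) t,
      ‖u40g t n y‖ ≤ 10*t^2*(t^2)^n/n.factorial := by
    intro n y hy
    have hy2 : y^2 ≤ t^2 := by nlinarith [hy.1, hy.2]
    have hK0 : (0:ℝ) ≤ t^2-y^2 := by nlinarith [hy.1, hy.2]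
    have hK1 : t^2-y^2 ≤ t^2 := by nlinarith [sq_nonneg y]
    have a1 : |u40p1 (n+1)| ≤ 2/n.factorial := (u40p1_le (n+1)).trans (hfle n)
    have a2 : |u40p0 (n+1)| ≤ 2/n.factorial := (u40p0_le (n+1)).trans (hfle n)
    have a3 : |u40q n| ≤ 2/n.factorial := u40q_le n
    have b1 : |(t^2-y^2)^n| ≤ (t^2)^n := by
      rw [abs_pow, abs_of_nonneg hK0]; exact pow_le_pow_left₀ hK0 hK1 n
    have b2 : |(t^2-y^2)^(n+1)| ≤ t^2*(t^2)^n := by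
      rw [abs_pow, abs_of_nonneg hK0]
      calc (t^2-y^2)^(n+1) ≤ (t^2)^(n+1) := pow_le_pow_left₀ hK0 hK1 (n+1)
        _ = t^2*(t^2)^n := by ring
    have hfn : (0:ℝ) < n.factorial := by exact_mod_cast n.factorial_pos
    rw [Real.norm_eq_abs, u40g]
    calc |(-2*y^2*u40p1 (n+1) + t^2*(u40p0 (n+1) + u40q n)) * (t^2-y^2)^n
          - u40p0 (n+1) * (t^2-y^2)^(n+1)|
        ≤ |(-2*y^2*u40p1 (n+1) + t^2*(u40p0 (n+1) + u40q n))| * |(t^2-y^2)^n|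
          + |u40p0 (n+1)| * |(t^2-y^2)^(n+1)| := by
          rw [← abs_mul, ← abs_mul]; exact abs_sub _ _
      _ ≤ (|(-2*y^2*u40p1 (n+1))| + |t^2*(u40p0 (n+1) + u40q n)|) * |(t^2-y^2)^n|
          + |u40p0 (n+1)| * |(t^2-y^2)^(n+1)| := by
          gcongr
          exact abs_add_le _ _
      _ = (2*y^2*|u40p1 (n+1)| + t^2*|u40p0 (n+1) + u40q n|) * |(t^2-y^2)^n|
          + |u40p0 (n+1)| * |(t^2-y^2)^(n+1)| := by
          rw [abs_mul, abs_mul, abs_neg, abs_two, abs_of_nonneg (sq_nonneg y), abs_mul,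
            abs_of_nonneg (sq_nonneg t)]
      _ ≤ (2*t^2*(2/n.factorial) + t^2*(2/n.factorial + 2/n.factorial)) * (t^2)^n
          + (2/n.factorial) * (t^2*(t^2)^n) := by
          gcongr
          · exact (abs_add_le _ _).trans (by linarith)
      _ = 10*t^2*(t^2)^n/n.factorial := by ring
  have hsum : Summable (fun n => ∫ y in Set.Ioo (-t) t, ‖u40g t n y‖) := by
    apply Summable.of_nonneg_of_le
      (fun n => integral_nonneg (fun y => norm_nonneg _))
      (fun n => ?_)
      (((Real.summable_pow_div_factorial (t^2)).mul_left (2*t*(10*t^2))).congr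
        (fun n => by ring) :
        Summable (fun n : ℕ => 2*t*(10*t^2*(t^2)^n/n.factorial)))
    calc ∫ y in Set.Ioo (-t) t, ‖u40g t n y‖
        ≤ ∫ _y in Set.Ioo (-t) t, 10*t^2*(t^2)^n/n.factorial :=
          setIntegral_mono_on ((hint n).norm)
            (integrableOn_const measure_Ioo_lt_top.ne) measurableSet_Ioo (hb n)
      _ = (volume (Set.Ioo (-t) t)).toReal • (10*t^2*(t^2)^n/n.factorial) :=
          setIntegral_const _
      _ = 2*t*(10*t^2*(t^2)^n/n.factorial) := by
          rw [Real.volume_Ioo, ENNReal.toReal_ofReal (by linarith), smul_eq_mul]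
          ring
  rw [intervalIntegral.integral_of_le (by linarith : -t ≤ t),
    MeasureTheory.integral_Ioc_eq_integral_Ioo,
    MeasureTheory.setIntegral_congr_fun measurableSet_Ioo hu,
    ← MeasureTheory.integral_tsum_of_summable_integral_norm hint hsum]
  calc ∑' n, ∫ y in Set.Ioo (-t) t, u40g t n y
      = ∑' n : ℕ, 2*(1+(-1:ℝ)^(n+1))*t^(2*n+3)/((2*n+3).factorial) := by
        apply tsum_congr
        intro n
        rw [← MeasureTheory.integral_Ioc_eq_integral_Ioo,
          ← intervalIntegral.integral_of_le (by linarith : -t ≤ t)]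
        exact u40intg t n
    _ = 2*Real.sinh t + 2*Real.sin t - 4*t := u40sum t
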